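/- Let ε₁, ε₂, γ₁, γ₂ > 0 and let N₁, N₂ : ℝ → ℝ be differentiable positive functions satisfying the Volterra predator-prey system N₁' = N₁(ε₁ − γ₁ N₂), N₂' = −N₂(ε₂ − γ₂ N₁), and suppose the solution is periodic with period T > 0 (N₁(t+T) = N₁(t) and N₂(t+T) = N₂(t) for all t). Then the time average of the prey over one period equals the equilibrium value: (1/T) ∫₀ᵀ N₁(t) dt = ε₂/γ₂. -/

import Mathlib

/-- The time average of the prey over one period of a periodic solution of the
Volterra predator-prey system equals the equilibrium value ε₂/γ₂. -/
theorem volterra_prey_average (ε₁ ε₂ γ₁ γ₂ T : ℝ)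
    (hε₁ : 0 < ε₁) (hε₂ : 0 < ε₂) (hγ₁ : 0 < γ₁) (hγ₂ : 0 < γ₂) (hT : 0 < T)
    (N₁ N₂ : ℝ → ℝ) (hpos₁ : ∀ t, 0 < N₁ t) (hpos₂ : ∀ t, 0 < N₂ t)
    (hode₁ : ∀ t, HasDerivAt N₁ (N₁ t * (ε₁ - γ₁ * N₂ t)) t)
    (hode₂ : ∀ t, HasDerivAt N₂ (-(N₂ t) * (ε₂ - γ₂ * N₁ t)) t)
    (hper₁ : ∀ t, N₁ (t + T) = N₁ t) (hper₂ : ∀ t, N₂ (t + T) = N₂ t) :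
    (1 / T) * ∫ t in (0 : ℝ)..T, N₁ t = ε₂ / γ₂ := by
  have hlog : ∀ t, HasDerivAt (fun t => Real.log (N₂ t))
      (γ₂ * N₁ t - ε₂) t := by
    intro t
    have h := (hode₂ t).log (hpos₂ t).ne'
    have : -(N₂ t) * (ε₂ - γ₂ * N₁ t) / N₂ t = γ₂ * N₁ t - ε₂ := by
      rw [neg_mul, neg_div, mul_comm, mul_div_assoc, div_self (hpos₂ t).ne', mul_one]
      ring
    rwa [this] at h
  have hcont₁ : Continuous N₁ := by
    have : Differentiable ℝ N₁ := fun t => (hode₁ t).differentiableAt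
    exact this.continuous
  have hcont : Continuous fun t => γ₂ * N₁ t - ε₂ :=
    ((continuous_const.mul hcont₁).sub continuous_const)
  have hint : ∫ t in (0:ℝ)..T, (γ₂ * N₁ t - ε₂) =
      Real.log (N₂ T) - Real.log (N₂ 0) := by
    exact intervalIntegral.integral_eq_sub_of_hasDerivAt
      (fun t _ => hlog t) (hcont.intervalIntegrable 0 T)
  have hzero : Real.log (N₂ T) - Real.log (N₂ 0) = 0 := by
    have := hper₂ 0
    simp only [zero_add] at this
    rw [this, sub_self]
  rw [hzero] at hint
  have h2 : γ₂ * (∫ t in (0:ℝ)..T, N₁ t) - ε₂ * T = 0 := by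
    have := hint
    rw [intervalIntegral.integral_sub (f := fun t => γ₂ * N₁ t) ((continuous_const.mul hcont₁).intervalIntegrable 0 T)
      (intervalIntegrable_const), intervalIntegral.integral_const_mul,
      intervalIntegral.integral_const] at this
    simpa [mul_comm, smul_eq_mul] using this
  have hI : ∫ t in (0:ℝ)..T, N₁ t = ε₂ * T / γ₂ := by
    field_simp at h2 ⊢
    linarith
  rw [hI]
  field_simp
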